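/- Fix ε > 0 and α > 1, and set K := e^{(α−1)ε}. For x, y ∈ [0,1], define F_α(x,y) := x^α·y^{1−α} + (1−x)^α·(1−y)^{1−α}, with arithmetic in the extended nonnegative reals [0,∞] and the convention 0^t = ∞ for t < 0 and 0^0 = 1. A channel T from [k] to [2] with first row (x₁, …, x_k) is (ε,α)-RDP if F_α(x_i, x_j) ≤ K for all i, j ∈ [k]; the set C of (ε,α)-RDP channels from [k] to [2] is convex. Let p, q be distributions on [k] with p_i + q_i > 0 for all i, and let A := {(Tp, Tq) : T ∈ C}. If T ∈ C and (Tp, Tq) is an extreme point of A, then there exist a threshold channel T₂ ∈ T^thresh_{2,k} for (p,q) and an extreme point T₁ of the set of (ε,α)-RDP channels from [2] to [2] such that (Tp, Tq) = ((T₁·T₂)p, (T₁·T₂)q), where T₁·T₂ denotes the matrix product. -/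

import Mathlib

open scoped Classical ENNReal
open Finset

noncomputable section

/-- `p` is a probability distribution on `Fin k`. -/
def IsDist {k : ℕ} (p : Fin k → ℝ) : Prop :=
  (∀ i, 0 ≤ p i) ∧ ∑ i, p i = 1

/-- `T` is a channel from `[k]` to `[ℓ]`: nonnegative entries, columns sum to 1. -/
def IsChannel {ℓ k : ℕ} (T : Matrix (Fin ℓ) (Fin k) ℝ) : Prop :=
  (∀ r c, 0 ≤ T r c) ∧ ∀ c, ∑ r, T r c = 1

/-- Squared Hellinger divergence `d_h²(p,q) = Σ_i (√p_i − √q_i)²`. -/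
def hellingerSq {k : ℕ} (p q : Fin k → ℝ) : ℝ :=
  ∑ i, (Real.sqrt (p i) - Real.sqrt (q i)) ^ 2

/-- Total variation distance `d_TV(p,q) = (1/2) Σ_i |p_i − q_i|`. -/
def tvDist {k : ℕ} (p q : Fin k → ℝ) : ℝ :=
  (1 / 2) * ∑ i, |p i - q i|

/-- `T` is an `ε`-LDP channel: `T(r,c) ≤ e^ε T(r,c')` for all rows `r`, columns `c, c'`. -/
def IsLDP {ℓ k : ℕ} (ε : ℝ) (T : Matrix (Fin ℓ) (Fin k) ℝ) : Prop :=
  IsChannel T ∧ ∀ r c c', T r c ≤ Real.exp ε * T r c'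

/-- The deterministic channel induced by a map `f : [k] → [ℓ]`. -/
def detChannel {k ℓ : ℕ} (f : Fin k → Fin ℓ) : Matrix (Fin ℓ) (Fin k) ℝ :=
  fun r c => if r = f c then 1 else 0

/-- Likelihood ratio `p_i / q_i`, taken to be `+∞` when `q_i = 0`. -/
def lr {k : ℕ} (p q : Fin k → ℝ) (i : Fin k) : EReal :=
  if q i = 0 then ⊤ else ((p i / q i : ℝ) : EReal)

/-- `T` is a threshold channel for `(p, q)`: it is deterministic, induced by a map `f`,
and whenever `p_u/q_u < p_v/q_v` and `f u = f v`, every `w` whose likelihood ratio lies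
strictly between those of `u` and `v` satisfies `f w = f u`. -/
def IsThresholdChannel {k ℓ : ℕ} (p q : Fin k → ℝ) (T : Matrix (Fin ℓ) (Fin k) ℝ) : Prop :=
  ∃ f : Fin k → Fin ℓ, T = detChannel f ∧
    ∀ u v w : Fin k, lr p q u < lr p q v → f u = f v →
      lr p q u < lr p q w → lr p q w < lr p q v → f w = f u

/-- `F_α(x,y) = x^α y^{1−α} + (1−x)^α (1−y)^{1−α}` in the extended nonnegative reals
(with `0^t = ∞` for `t < 0` and `0^0 = 1`, the `ENNReal.rpow` conventions). -/
def Fα (α x y : ℝ) : ℝ≥0∞ :=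
  ENNReal.ofReal x ^ α * ENNReal.ofReal y ^ (1 - α) +
    ENNReal.ofReal (1 - x) ^ α * ENNReal.ofReal (1 - y) ^ (1 - α)

/-- A channel `T` from `[k]` to `[2]`, with first row `(x₁, …, x_k)`, is `(ε,α)`-RDP if
`F_α(x_i, x_j) ≤ e^{(α−1)ε}` for all `i, j`. -/
def IsRDP (ε α : ℝ) {k : ℕ} (T : Matrix (Fin 2) (Fin k) ℝ) : Prop :=
  IsChannel T ∧
    ∀ i j : Fin k, Fα α (T 0 i) (T 0 j) ≤ ENNReal.ofReal (Real.exp ((α - 1) * ε))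

lemma Fa_self {α x : ℝ} (hα : 1 < α) (h0 : 0 ≤ x) (h1 : x ≤ 1) : Fα α x x = 1 := by
  have hαpos : (0:ℝ) < α := by linarith
  rcases eq_or_lt_of_le h0 with h0' | h0'
  · rw [Fα, ← h0']
    simp only [ENNReal.ofReal_zero, sub_zero, ENNReal.ofReal_one, ENNReal.one_rpow, one_mul,
      ENNReal.zero_rpow_of_pos hαpos, zero_mul, zero_add]
  rcases eq_or_lt_of_le h1 with h1' | h1'
  · rw [Fα, h1']
    simp only [ENNReal.ofReal_one, ENNReal.one_rpow, one_mul, sub_self, ENNReal.ofReal_zero,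
      ENNReal.zero_rpow_of_pos hαpos, zero_mul, add_zero]
  · have e1 : ENNReal.ofReal x ≠ 0 := by simp [h0']
    have e2 : ENNReal.ofReal (1 - x) ≠ 0 := by simp; linarith
    have key : ∀ z : ℝ≥0∞, z ≠ 0 → z ≠ ⊤ → z ^ α * z ^ (1 - α) = z := by
      intro z hz hz'
      rw [← ENNReal.rpow_add _ _ hz hz']
      simp
    rw [Fα, key _ e1 ENNReal.ofReal_ne_top, key _ e2 ENNReal.ofReal_ne_top,
      ← ENNReal.ofReal_add h0 (by linarith)]
    simp

lemma one_le_K {ε α : ℝ} (hε : 0 < ε) (hα : 1 < α) :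
    (1:ℝ≥0∞) ≤ ENNReal.ofReal (Real.exp ((α-1)*ε)) := by
  rw [show (1:ℝ≥0∞) = ENNReal.ofReal 1 by simp]
  apply ENNReal.ofReal_le_ofReal
  have h := Real.exp_le_exp.2 (mul_nonneg (by linarith : (0:ℝ) ≤ α - 1) hε.le)
  rwa [Real.exp_zero] at h

lemma real_reverse_holder {α t s x₁ y₁ x₂ y₂ : ℝ} (hα : 1 < α) (ht : 0 < t) (hs : 0 < s)
    (hx₁ : 0 ≤ x₁) (hx₂ : 0 ≤ x₂) (hy₁ : 0 < y₁) (hy₂ : 0 < y₂) :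
    (t*x₁+s*x₂)^α * (t*y₁+s*y₂)^(1-α) ≤ t*(x₁^α*y₁^(1-α)) + s*(x₂^α*y₂^(1-α)) := by
  set Y := t*y₁+s*y₂ with hYdef
  have hY : 0 < Y := by positivity
  have key : ∀ x y : ℝ, 0 ≤ x → 0 < y → y * (x/y)^α = x^α * y^(1-α) := by
    intro x y hx hy
    rw [Real.div_rpow hx hy.le, Real.rpow_sub hy, Real.rpow_one]
    field_simp
    try ring
  have hJ := Real.rpow_arith_mean_le_arith_mean_rpow univ
    ![t*y₁/Y, s*y₂/Y] ![x₁/y₁, x₂/y₂] ?_ ?_ ?_ hα.le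
  rotate_left
  · intro i _; fin_cases i <;> simp <;> positivity
  · simp [Fin.sum_univ_succ]
    field_simp
    exact hYdef.symm
  · intro i _; fin_cases i <;> simp <;> positivity
  simp only [Fin.sum_univ_two, Matrix.cons_val_zero, Matrix.cons_val_one,
    Matrix.head_cons] at hJ
  have e1 : t*y₁/Y * (x₁/y₁) + s*y₂/Y * (x₂/y₂) = (t*x₁+s*x₂)/Y := by
    field_simp
  rw [e1] at hJ
  -- multiply by Y
  have hJ' := mul_le_mul_of_nonneg_right hJ hY.le
  calc (t*x₁+s*x₂)^α * Y^(1-α)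
      = ((t*x₁+s*x₂)/Y)^α * Y := by
        rw [Real.div_rpow (by positivity) hY.le, Real.rpow_sub hY, Real.rpow_one]
        field_simp
        try ring
    _ ≤ (t*y₁/Y * (x₁/y₁)^α + s*y₂/Y * (x₂/y₂)^α) * Y := hJ'
    _ = t*(y₁ * (x₁/y₁)^α) + s*(y₂ * (x₂/y₂)^α) := by field_simp
    _ = t*(x₁^α*y₁^(1-α)) + s*(x₂^α*y₂^(1-α)) := by rw [key _ _ hx₁ hy₁, key _ _ hx₂ hy₂]

lemma rpow_ofReal_ne_zero {x e : ℝ} (hx : 0 < x) : ENNReal.ofReal x ^ e ≠ 0 :=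
  (ENNReal.rpow_pos (by simp [hx]) ENNReal.ofReal_ne_top).ne'

lemma g_convex_aux {α t s x₁ x₂ y₂ : ℝ} (hα : 1 < α) (ht : 0 < t) (hs : 0 < s)
    (hx₁ : 0 ≤ x₁) (hx₂ : 0 ≤ x₂) (hy₂ : 0 ≤ y₂) :
    ENNReal.ofReal (t*x₁+s*x₂) ^ α * ENNReal.ofReal (t*0+s*y₂) ^ (1-α) ≤
      ENNReal.ofReal t * (ENNReal.ofReal x₁ ^ α * ENNReal.ofReal 0 ^ (1-α)) +
      ENNReal.ofReal s * (ENNReal.ofReal x₂ ^ α * ENNReal.ofReal y₂ ^ (1-α)) := by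
  have hαpos : (0:ℝ) < α := by linarith
  have hneg : (1:ℝ) - α < 0 := by linarith
  have hT0 : ENNReal.ofReal t ≠ 0 := by simp [ht]
  have hS0 : ENNReal.ofReal s ≠ 0 := by simp [hs]
  rcases eq_or_lt_of_le hx₁ with hx₁0 | hx₁0
  · -- x₁ = 0 : the t-term vanishes on both sides
    rw [← hx₁0]
    simp only [mul_zero, zero_add, ENNReal.ofReal_zero, ENNReal.zero_rpow_of_pos hαpos,
      zero_mul, zero_add]
    rw [ENNReal.ofReal_mul hs.le, ENNReal.ofReal_mul hs.le,
      ENNReal.mul_rpow_of_nonneg _ _ hαpos.le]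
    rcases eq_or_lt_of_le hy₂ with hy₂0 | hy₂0
    · rw [← hy₂0]
      simp only [ENNReal.ofReal_zero, mul_zero, ENNReal.zero_rpow_of_neg hneg]
      rcases eq_or_lt_of_le hx₂ with hx₂0 | hx₂0
      · rw [← hx₂0]; simp [ENNReal.zero_rpow_of_pos hαpos]
      · have h1 : ENNReal.ofReal s ^ α * ENNReal.ofReal x₂ ^ α ≠ 0 :=
          mul_ne_zero (rpow_ofReal_ne_zero hs) (rpow_ofReal_ne_zero hx₂0)
        have h2 : ENNReal.ofReal s * (ENNReal.ofReal x₂ ^ α * ⊤) = ⊤ := by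
          rw [ENNReal.mul_top (rpow_ofReal_ne_zero hx₂0), ENNReal.mul_top hS0]
        rw [ENNReal.mul_top h1, h2]
        try exact le_top
    · have hY₂0 : ENNReal.ofReal y₂ ≠ 0 := by simp [hy₂0]
      calc ENNReal.ofReal s ^ α * ENNReal.ofReal x₂ ^ α *
            (ENNReal.ofReal s * ENNReal.ofReal y₂) ^ (1-α)
          = (ENNReal.ofReal s ^ α * ENNReal.ofReal s ^ (1-α)) *
            (ENNReal.ofReal x₂ ^ α * ENNReal.ofReal y₂ ^ (1-α)) := by
            rw [ENNReal.mul_rpow_of_ne_zero hS0 hY₂0]; ring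
        _ = ENNReal.ofReal s * (ENNReal.ofReal x₂ ^ α * ENNReal.ofReal y₂ ^ (1-α)) := by
            rw [← ENNReal.rpow_add _ _ hS0 ENNReal.ofReal_ne_top,
              show α + (1-α) = 1 by ring, ENNReal.rpow_one]
        _ ≤ _ := le_refl _
  · -- x₁ > 0, y₁ = 0: RHS t-term is ⊤
    have h2 : ENNReal.ofReal t * (ENNReal.ofReal x₁ ^ α * ENNReal.ofReal (0:ℝ) ^ (1-α)) = ⊤ := by
      rw [show ENNReal.ofReal (0:ℝ) = 0 by simp, ENNReal.zero_rpow_of_neg hneg,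
        ENNReal.mul_top (rpow_ofReal_ne_zero hx₁0), ENNReal.mul_top hT0]
    rw [h2, top_add]
    try exact le_top

lemma g_convex {α t s x₁ y₁ x₂ y₂ : ℝ} (hα : 1 < α) (ht : 0 ≤ t) (hs : 0 ≤ s)
    (hts : t + s = 1) (hx₁ : 0 ≤ x₁) (hy₁ : 0 ≤ y₁) (hx₂ : 0 ≤ x₂) (hy₂ : 0 ≤ y₂) :
    ENNReal.ofReal (t*x₁+s*x₂) ^ α * ENNReal.ofReal (t*y₁+s*y₂) ^ (1-α) ≤
      ENNReal.ofReal t * (ENNReal.ofReal x₁ ^ α * ENNReal.ofReal y₁ ^ (1-α)) +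
      ENNReal.ofReal s * (ENNReal.ofReal x₂ ^ α * ENNReal.ofReal y₂ ^ (1-α)) := by
  have hαpos : (0:ℝ) < α := by linarith
  rcases eq_or_lt_of_le ht with ht0 | ht0
  · have hs1 : s = 1 := by linarith
    subst hs1; rw [← ht0]; simp
  rcases eq_or_lt_of_le hs with hs0 | hs0
  · have ht1 : t = 1 := by linarith
    subst ht1; rw [← hs0]; simp
  rcases eq_or_lt_of_le hy₁ with hy₁0 | hy₁0
  · rw [← hy₁0]; exact g_convex_aux hα ht0 hs0 hx₁ hx₂ hy₂
  rcases eq_or_lt_of_le hy₂ with hy₂0 | hy₂0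
  · rw [← hy₂0]
    have h := g_convex_aux hα hs0 ht0 hx₂ hx₁ hy₁
    calc ENNReal.ofReal (t*x₁+s*x₂) ^ α * ENNReal.ofReal (t*y₁+s*0) ^ (1-α)
        = ENNReal.ofReal (s*x₂+t*x₁) ^ α * ENNReal.ofReal (s*0+t*y₁) ^ (1-α) := by
          rw [add_comm (t*x₁), add_comm (t*y₁)]
      _ ≤ _ := h.trans_eq (add_comm _ _)
  · -- main case: y₁, y₂ > 0, everything finite
    have hY : (0:ℝ) < t*y₁+s*y₂ := by positivity
    have hR := real_reverse_holder hα ht0 hs0 hx₁ hx₂ hy₁0 hy₂0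
    have c1 : ENNReal.ofReal (t*x₁+s*x₂) ^ α = ENNReal.ofReal ((t*x₁+s*x₂)^α) :=
      ENNReal.ofReal_rpow_of_nonneg (by positivity) hαpos.le
    have c2 : ENNReal.ofReal (t*y₁+s*y₂) ^ (1-α) = ENNReal.ofReal ((t*y₁+s*y₂)^(1-α)) :=
      ENNReal.ofReal_rpow_of_pos hY
    have c3 : ENNReal.ofReal x₁ ^ α = ENNReal.ofReal (x₁^α) :=
      ENNReal.ofReal_rpow_of_nonneg hx₁ hαpos.le
    have c4 : ENNReal.ofReal y₁ ^ (1-α) = ENNReal.ofReal (y₁^(1-α)) :=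
      ENNReal.ofReal_rpow_of_pos hy₁0
    have c5 : ENNReal.ofReal x₂ ^ α = ENNReal.ofReal (x₂^α) :=
      ENNReal.ofReal_rpow_of_nonneg hx₂ hαpos.le
    have c6 : ENNReal.ofReal y₂ ^ (1-α) = ENNReal.ofReal (y₂^(1-α)) :=
      ENNReal.ofReal_rpow_of_pos hy₂0
    rw [c1, c2, c3, c4, c5, c6,
      ← ENNReal.ofReal_mul (show (0:ℝ) ≤ (t*x₁+s*x₂)^α by positivity),
      ← ENNReal.ofReal_mul (show (0:ℝ) ≤ x₁^α from Real.rpow_nonneg hx₁ α),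
      ← ENNReal.ofReal_mul (show (0:ℝ) ≤ x₂^α from Real.rpow_nonneg hx₂ α),
      ← ENNReal.ofReal_mul ht, ← ENNReal.ofReal_mul hs,
      ← ENNReal.ofReal_add (by positivity) (by positivity)]
    exact ENNReal.ofReal_le_ofReal hR

lemma channel_le_one {ℓ k : ℕ} {S : Matrix (Fin ℓ) (Fin k) ℝ} (hS : IsChannel S)
    (r : Fin ℓ) (c : Fin k) : S r c ≤ 1 := by
  rw [← hS.2 c]
  exact Finset.single_le_sum (fun r' _ => hS.1 r' c) (mem_univ r)

lemma channel_row1 {k : ℕ} {S : Matrix (Fin 2) (Fin k) ℝ} (hS : IsChannel S) (c : Fin k) :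
    S 1 c = 1 - S 0 c := by
  have := hS.2 c
  rw [Fin.sum_univ_two] at this
  linarith

lemma Fa_convex {α t s x₁ y₁ x₂ y₂ : ℝ} (hα : 1 < α) (ht : 0 ≤ t) (hs : 0 ≤ s)
    (hts : t + s = 1) (hx₁ : 0 ≤ x₁) (hx₁' : x₁ ≤ 1) (hy₁ : 0 ≤ y₁) (hy₁' : y₁ ≤ 1)
    (hx₂ : 0 ≤ x₂) (hx₂' : x₂ ≤ 1) (hy₂ : 0 ≤ y₂) (hy₂' : y₂ ≤ 1) :
    Fα α (t*x₁+s*x₂) (t*y₁+s*y₂) ≤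
      ENNReal.ofReal t * Fα α x₁ y₁ + ENNReal.ofReal s * Fα α x₂ y₂ := by
  have h1 := g_convex hα ht hs hts hx₁ hy₁ hx₂ hy₂
  have h2 := g_convex hα ht hs hts (by linarith : (0:ℝ) ≤ 1-x₁) (by linarith : (0:ℝ) ≤ 1-y₁)
    (by linarith : (0:ℝ) ≤ 1-x₂) (by linarith : (0:ℝ) ≤ 1-y₂)
  rw [show t*(1-x₁)+s*(1-x₂) = 1 - (t*x₁+s*x₂) by linarith,
    show t*(1-y₁)+s*(1-y₂) = 1 - (t*y₁+s*y₂) by linarith] at h2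
  calc Fα α (t*x₁+s*x₂) (t*y₁+s*y₂) ≤
      (ENNReal.ofReal t * (ENNReal.ofReal x₁ ^ α * ENNReal.ofReal y₁ ^ (1-α)) +
       ENNReal.ofReal s * (ENNReal.ofReal x₂ ^ α * ENNReal.ofReal y₂ ^ (1-α))) +
      (ENNReal.ofReal t * (ENNReal.ofReal (1-x₁) ^ α * ENNReal.ofReal (1-y₁) ^ (1-α)) +
       ENNReal.ofReal s * (ENNReal.ofReal (1-x₂) ^ α * ENNReal.ofReal (1-y₂) ^ (1-α))) :=
      add_le_add h1 h2
    _ = ENNReal.ofReal t * Fα α x₁ y₁ + ENNReal.ofReal s * Fα α x₂ y₂ := by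
      rw [Fα, Fα]; ring

lemma IsRDP_convex (ε α : ℝ) (hα : 1 < α) (k : ℕ) :
    Convex ℝ {S : Matrix (Fin 2) (Fin k) ℝ | IsRDP ε α S} := by
  intro S₁ h₁ S₂ h₂ a b ha hb hab
  have entry : ∀ r c, (a • S₁ + b • S₂) r c = a * S₁ r c + b * S₂ r c := by
    intro r c; simp [Matrix.add_apply]
  have hch : IsChannel (a • S₁ + b • S₂) := by
    constructor
    · intro r c; rw [entry]
      have := h₁.1.1 r c; have := h₂.1.1 r c
      positivity
    · intro c
      simp only [entry]
      rw [Finset.sum_add_distrib, ← Finset.mul_sum, ← Finset.mul_sum, h₁.1.2 c, h₂.1.2 c]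
      linarith
  refine ⟨hch, fun i j => ?_⟩
  have b₁ := h₁.1.1; have b₂ := h₂.1.1
  have c₁ := fun r c => channel_le_one h₁.1 r c
  have c₂ := fun r c => channel_le_one h₂.1 r c
  rw [entry, entry]
  calc Fα α (a * S₁ 0 i + b * S₂ 0 i) (a * S₁ 0 j + b * S₂ 0 j)
      ≤ ENNReal.ofReal a * Fα α (S₁ 0 i) (S₁ 0 j) + ENNReal.ofReal b * Fα α (S₂ 0 i) (S₂ 0 j) :=
        Fa_convex hα ha hb hab (b₁ 0 i) (c₁ 0 i) (b₁ 0 j) (c₁ 0 j) (b₂ 0 i) (c₂ 0 i)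
          (b₂ 0 j) (c₂ 0 j)
    _ ≤ ENNReal.ofReal a * ENNReal.ofReal (Real.exp ((α - 1) * ε)) +
        ENNReal.ofReal b * ENNReal.ofReal (Real.exp ((α - 1) * ε)) :=
        add_le_add (mul_le_mul_right (h₁.2 i j) _) (mul_le_mul_right (h₂.2 i j) _)
    _ = ENNReal.ofReal (Real.exp ((α - 1) * ε)) := by
        rw [← add_mul, ← ENNReal.ofReal_add ha hb, hab]; simp

lemma first_term_bound {α x y c : ℝ} (hα : 1 < α) (hx : 0 ≤ x) (hy : 0 ≤ y) (hc : 0 < c)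
    (h : ENNReal.ofReal x ^ α * ENNReal.ofReal y ^ (1-α) ≤ ENNReal.ofReal c) :
    x ^ α ≤ c * y ^ (α-1) := by
  have hneg : (1:ℝ) - α < 0 := by linarith
  rcases eq_or_lt_of_le hy with hy0 | hy0
  · -- y = 0
    rcases eq_or_lt_of_le hx with hx0 | hx0
    · rw [← hx0, ← hy0, Real.zero_rpow (by linarith : α ≠ 0),
        Real.zero_rpow (by linarith : α - 1 ≠ 0), mul_zero]
    · exfalso
      rw [← hy0] at h
      rw [show ENNReal.ofReal (0:ℝ) = 0 by simp, ENNReal.zero_rpow_of_neg hneg,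
        ENNReal.mul_top (rpow_ofReal_ne_zero hx0)] at h
      exact ENNReal.ofReal_ne_top (top_le_iff.1 h)
  · -- y > 0
    rw [ENNReal.ofReal_rpow_of_nonneg hx (by linarith : (0:ℝ) ≤ α),
      ENNReal.ofReal_rpow_of_pos hy0, ← ENNReal.ofReal_mul (Real.rpow_nonneg hx α),
      ENNReal.ofReal_le_ofReal_iff hc.le] at h
    have key : x ^ α = x ^ α * y ^ (1-α) * y ^ (α-1) := by
      rw [mul_assoc, ← Real.rpow_add hy0, show (1-α)+(α-1) = 0 by ring, Real.rpow_zero, mul_one]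
    rw [key]
    exact mul_le_mul_of_nonneg_right h (Real.rpow_nonneg hy0.le _)

lemma Fa_eq_ofReal {α x y : ℝ} (hα : 1 < α) (hx0 : 0 ≤ x) (hx1 : x ≤ 1)
    (hy0 : 0 < y) (hy1 : y < 1) :
    Fα α x y = ENNReal.ofReal (x^α * y^(1-α) + (1-x)^α * (1-y)^(1-α)) := by
  have hαpos : (0:ℝ) < α := by linarith
  rw [Fα, ENNReal.ofReal_rpow_of_nonneg hx0 hαpos.le, ENNReal.ofReal_rpow_of_pos hy0,
    ENNReal.ofReal_rpow_of_nonneg (by linarith) hαpos.le,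
    ENNReal.ofReal_rpow_of_pos (by linarith),
    ← ENNReal.ofReal_mul (Real.rpow_nonneg hx0 α),
    ← ENNReal.ofReal_mul (Real.rpow_nonneg (by linarith) α),
    ← ENNReal.ofReal_add (mul_nonneg (Real.rpow_nonneg hx0 _) (Real.rpow_nonneg hy0.le _))
      (mul_nonneg (Real.rpow_nonneg (by linarith) _) (Real.rpow_nonneg (by linarith) _))]

instance {m n : ℕ} : SequentialSpace (Matrix (Fin m) (Fin n) ℝ) :=
  inferInstanceAs (SequentialSpace (Fin m → Fin n → ℝ))

instance {m n : ℕ} : LocallyConvexSpace ℝ (Matrix (Fin m) (Fin n) ℝ) :=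
  inferInstanceAs (LocallyConvexSpace ℝ (Fin m → Fin n → ℝ))

lemma RDP_closed (ε α : ℝ) (hε : 0 < ε) (hα : 1 < α) (k : ℕ) :
    IsClosed {S : Matrix (Fin 2) (Fin k) ℝ | IsRDP ε α S} := by
  have hαpos : (0:ℝ) < α := by linarith
  have hc : (0:ℝ) < Real.exp ((α-1)*ε) := Real.exp_pos _
  apply IsSeqClosed.isClosed
  intro Sn S hSn hlim
  have hent : ∀ r c, Filter.Tendsto (fun n => Sn n r c) Filter.atTop (nhds (S r c)) := by
    intro r c
    have h1 := (tendsto_pi_nhds.1 hlim) r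
    exact (tendsto_pi_nhds.1 h1) c
  have hchan : IsChannel S := by
    constructor
    · intro r c
      exact ge_of_tendsto (hent r c) (Filter.Eventually.of_forall fun n => (hSn n).1.1 r c)
    · intro c
      have hsum : Filter.Tendsto (fun n => ∑ r, Sn n r c) Filter.atTop (nhds (∑ r, S r c)) :=
        tendsto_finset_sum _ fun r _ => hent r c
      have : Filter.Tendsto (fun n => ∑ r, Sn n r c) Filter.atTop (nhds 1) := by
        simp only [fun n => (hSn n).1.2 c]
        exact tendsto_const_nhds
      exact tendsto_nhds_unique hsum this
  refine ⟨hchan, fun i j => ?_⟩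
  set x := S 0 i
  set y := S 0 j
  have hx0 : 0 ≤ x := hchan.1 0 i
  have hx1 : x ≤ 1 := channel_le_one hchan 0 i
  have hy0 : 0 ≤ y := hchan.1 0 j
  have hy1 : y ≤ 1 := channel_le_one hchan 0 j
  have hxn0 : ∀ n, 0 ≤ Sn n 0 i := fun n => (hSn n).1.1 0 i
  have hxn1 : ∀ n, Sn n 0 i ≤ 1 := fun n => channel_le_one (hSn n).1 0 i
  have hyn0 : ∀ n, 0 ≤ Sn n 0 j := fun n => (hSn n).1.1 0 j
  have hyn1 : ∀ n, Sn n 0 j ≤ 1 := fun n => channel_le_one (hSn n).1 0 j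
  have hK := fun n => (hSn n).2 i j
  rcases eq_or_lt_of_le hy0 with hyz | hyz
  · -- y = 0 : show x = 0
    have hb : ∀ n, (Sn n 0 i) ^ α ≤ Real.exp ((α-1)*ε) * (Sn n 0 j) ^ (α-1) := by
      intro n
      apply first_term_bound hα (hxn0 n) (hyn0 n) hc
      exact le_trans (self_le_add_right _ _) (hK n)
    have hlhs : Filter.Tendsto (fun n => (Sn n 0 i) ^ α) Filter.atTop (nhds (x ^ α)) :=
      (hent 0 i).rpow_const (Or.inr hαpos.le)
    have hrhs : Filter.Tendsto (fun n => Real.exp ((α-1)*ε) * (Sn n 0 j) ^ (α-1))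
        Filter.atTop (nhds (Real.exp ((α-1)*ε) * y ^ (α-1))) :=
      ((hent 0 j).rpow_const (Or.inr (by linarith))).const_mul _
    have hle : x ^ α ≤ Real.exp ((α-1)*ε) * y ^ (α-1) :=
      le_of_tendsto_of_tendsto' hlhs hrhs hb
    rw [← hyz, Real.zero_rpow (by linarith : α - 1 ≠ 0), mul_zero] at hle
    have hxz : x = 0 := by
      by_contra hne
      have : 0 < x ^ α := Real.rpow_pos_of_pos (lt_of_le_of_ne hx0 (Ne.symm hne)) α
      linarith
    rw [hxz, ← hyz, Fa_self hα le_rfl zero_le_one]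
    exact one_le_K hε hα
  rcases eq_or_lt_of_le hy1 with hyo | hyo
  · -- y = 1 : show x = 1
    have hb : ∀ n, (1 - Sn n 0 i) ^ α ≤ Real.exp ((α-1)*ε) * (1 - Sn n 0 j) ^ (α-1) := by
      intro n
      apply first_term_bound hα (by linarith [hxn1 n]) (by linarith [hyn1 n]) hc
      exact le_trans (self_le_add_left _ _) (hK n)
    have hlhs : Filter.Tendsto (fun n => (1 - Sn n 0 i) ^ α) Filter.atTop (nhds ((1-x) ^ α)) :=
      ((tendsto_const_nhds.sub (hent 0 i))).rpow_const (Or.inr hαpos.le)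
    have hrhs : Filter.Tendsto (fun n => Real.exp ((α-1)*ε) * (1 - Sn n 0 j) ^ (α-1))
        Filter.atTop (nhds (Real.exp ((α-1)*ε) * (1-y) ^ (α-1))) :=
      ((tendsto_const_nhds.sub (hent 0 j)).rpow_const (Or.inr (by linarith))).const_mul _
    have hle : (1-x) ^ α ≤ Real.exp ((α-1)*ε) * (1-y) ^ (α-1) :=
      le_of_tendsto_of_tendsto' hlhs hrhs hb
    rw [hyo, sub_self, Real.zero_rpow (by linarith : α - 1 ≠ 0), mul_zero] at hle
    have hxz : x = 1 := by
      by_contra hne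
      have h1x : 0 < 1 - x := by
        rcases lt_or_eq_of_le hx1 with h | h
        · linarith
        · exact absurd h hne
      have : 0 < (1-x) ^ α := Real.rpow_pos_of_pos h1x α
      linarith
    rw [hxz, hyo, Fa_self hα zero_le_one le_rfl]
    exact one_le_K hε hα
  · -- 0 < y < 1
    have hev : ∀ᶠ n in Filter.atTop, Sn n 0 j ∈ Set.Ioo (0:ℝ) 1 :=
      (hent 0 j).eventually (isOpen_Ioo.eventually_mem ⟨hyz, hyo⟩)
    have hreal : ∀ᶠ n in Filter.atTop,
        (Sn n 0 i)^α * (Sn n 0 j)^(1-α) + (1 - Sn n 0 i)^α * (1 - Sn n 0 j)^(1-α) ≤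
          Real.exp ((α-1)*ε) := by
      filter_upwards [hev] with n hn
      have := hK n
      rw [Fa_eq_ofReal hα (hxn0 n) (hxn1 n) hn.1 hn.2,
        ENNReal.ofReal_le_ofReal_iff hc.le] at this
      exact this
    have hlim' : Filter.Tendsto (fun n =>
        (Sn n 0 i)^α * (Sn n 0 j)^(1-α) + (1 - Sn n 0 i)^α * (1 - Sn n 0 j)^(1-α))
        Filter.atTop (nhds (x^α * y^(1-α) + (1-x)^α * (1-y)^(1-α))) := by
      apply Filter.Tendsto.add
      · exact ((hent 0 i).rpow_const (Or.inr hαpos.le)).mul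
          ((hent 0 j).rpow_const (Or.inl hyz.ne'))
      · exact ((tendsto_const_nhds.sub (hent 0 i)).rpow_const (Or.inr hαpos.le)).mul
          ((tendsto_const_nhds.sub (hent 0 j)).rpow_const (Or.inl (by linarith : 1 - y ≠ 0)))
    have hle := le_of_tendsto hlim' hreal
    rw [Fa_eq_ofReal hα hx0 hx1 hyz hyo]
    exact ENNReal.ofReal_le_ofReal hle

lemma lr_lt_iff {k : ℕ} {p q : Fin k → ℝ} (hp0 : ∀ i, 0 ≤ p i) (hq0 : ∀ i, 0 ≤ q i)
    (hpq : ∀ i, 0 < p i + q i) (i j : Fin k) :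
    lr p q i < lr p q j ↔ p i * q j < p j * q i := by
  unfold lr
  by_cases hqi : q i = 0
  · by_cases hqj : q j = 0
    · simp [hqi, hqj]
    · simp only [hqi, hqj, if_pos rfl, if_neg hqj, if_true]
      constructor
      · intro h; exact absurd h (not_lt_of_ge le_top)
      · intro h; exfalso
        have : 0 ≤ p i * q j := mul_nonneg (hp0 i) (hq0 j)
        have : p j * q i = 0 := by rw [hqi, mul_zero]
        linarith
  · by_cases hqj : q j = 0
    · simp only [if_neg hqi, hqj, if_pos rfl]
      have hqi' : 0 < q i := lt_of_le_of_ne (hq0 i) (Ne.symm hqi)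
      have hpj : 0 < p j := by have := hpq j; rw [hqj] at this; linarith
      constructor
      · intro _; rw [mul_zero]; exact mul_pos hpj hqi'
      · intro _; exact EReal.coe_lt_top _
    · simp only [if_neg hqi, if_neg hqj]
      have hqi' : 0 < q i := lt_of_le_of_ne (hq0 i) (Ne.symm hqi)
      have hqj' : 0 < q j := lt_of_le_of_ne (hq0 j) (Ne.symm hqj)
      rw [EReal.coe_lt_coe_iff, div_lt_div_iff₀ hqi' hqj']

lemma between_combo {pu qu pw qw pv qv : ℝ} (hpu : 0 ≤ pu) (hqu : 0 ≤ qu) (hpv : 0 ≤ pv)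
    (hqv : 0 ≤ qv) (hpw : 0 ≤ pw) (hqw : 0 ≤ qw)
    (h1 : pu * qw < pw * qu) (h2 : pw * qv < pv * qw) :
    ∃ s t : ℝ, 0 < s ∧ 0 < t ∧ pw = s * pu + t * pv ∧ qw = s * qu + t * qv := by
  have h3 : 0 < pv * qw := lt_of_le_of_lt (mul_nonneg hpw hqv) h2
  have h4 : 0 < pw * qu := lt_of_le_of_lt (mul_nonneg hpu hqw) h1
  have hqw' : 0 < qw := by nlinarith
  have hpw' : 0 < pw := by nlinarith
  have hmul : pu * qw * (pw * qv) < pw * qu * (pv * qw) :=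
    mul_lt_mul'' h1 h2 (mul_nonneg hpu hqw) (mul_nonneg hpw hqv)
  have hD : pu * qv < pv * qu := by
    have hP : 0 < pw * qw := mul_pos hpw' hqw'
    have : pu * qv * (pw * qw) < pv * qu * (pw * qw) := by nlinarith
    exact lt_of_mul_lt_mul_right this hP.le
  have hDpos : 0 < pv * qu - pu * qv := by linarith
  refine ⟨(pv * qw - pw * qv) / (pv * qu - pu * qv), (pw * qu - pu * qw) / (pv * qu - pu * qv),
    div_pos (by linarith) hDpos, div_pos (by linarith) hDpos, ?_, ?_⟩
  · rw [div_mul_eq_mul_div, div_mul_eq_mul_div, ← add_div, eq_div_iff hDpos.ne']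
    ring
  · rw [div_mul_eq_mul_div, div_mul_eq_mul_div, ← add_div, eq_div_iff hDpos.ne']
    ring

lemma threshold_construction {k : ℕ} (p q : Fin k → ℝ) (hp0 : ∀ i, 0 ≤ p i)
    (hq0 : ∀ i, 0 ≤ q i) (hpq : ∀ i, 0 < p i + q i) (l₁ m₁ l₂ m₂ : ℝ) :
    IsThresholdChannel p q (detChannel (fun i =>
      if 0 < l₁ * p i + m₁ * q i ∨ (l₁ * p i + m₁ * q i = 0 ∧ 0 < l₂ * p i + m₂ * q i)
      then (0 : Fin 2) else 1)) := by
  refine ⟨_, rfl, ?_⟩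
  intro u v w huv hfuv huw hwv
  rw [lr_lt_iff hp0 hq0 hpq] at huw hwv
  obtain ⟨s, t, hs, ht, hpw, hqw⟩ := between_combo (hp0 u) (hq0 u) (hp0 v) (hq0 v)
    (hp0 w) (hq0 w) huw hwv
  have hwu : l₁ * p w + m₁ * q w = s * (l₁ * p u + m₁ * q u) + t * (l₁ * p v + m₁ * q v) := by
    rw [hpw, hqw]; ring
  have hvu : l₂ * p w + m₂ * q w = s * (l₂ * p u + m₂ * q u) + t * (l₂ * p v + m₂ * q v) := by
    rw [hpw, hqw]; ring
  show (if _ then (0:Fin 2) else 1) = (if _ then (0:Fin 2) else 1)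
  by_cases hu : 0 < l₁ * p u + m₁ * q u ∨ (l₁ * p u + m₁ * q u = 0 ∧ 0 < l₂ * p u + m₂ * q u) <;>
    by_cases hv : 0 < l₁ * p v + m₁ * q v ∨ (l₁ * p v + m₁ * q v = 0 ∧ 0 < l₂ * p v + m₂ * q v)
  · -- both true: show C w
    rw [if_pos hu]
    have hu1 : 0 ≤ l₁ * p u + m₁ * q u := by
      rcases hu with h | h
      · linarith
      · linarith [h.1]
    have hv1 : 0 ≤ l₁ * p v + m₁ * q v := by
      rcases hv with h | h
      · linarith
      · linarith [h.1]
    have hw0 : 0 ≤ l₁ * p w + m₁ * q w := by nlinarith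
    rcases lt_or_eq_of_le hw0 with hw1 | hw1
    · rw [if_pos (Or.inl hw1)]
    · have hu0 : l₁ * p u + m₁ * q u = 0 := by nlinarith
      have hv0 : l₁ * p v + m₁ * q v = 0 := by nlinarith
      have hu2 : 0 < l₂ * p u + m₂ * q u := by
        rcases hu with h | h
        · exact absurd hu0 (by linarith)
        · exact h.2
      have hv2 : 0 < l₂ * p v + m₂ * q v := by
        rcases hv with h | h
        · exact absurd hv0 (by linarith)
        · exact h.2
      have : 0 < l₂ * p w + m₂ * q w := by nlinarith
      rw [if_pos (Or.inr ⟨hw1.symm, this⟩)]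
  · rw [if_pos hu, if_neg hv] at hfuv; exact absurd hfuv (by decide)
  · rw [if_neg hu, if_pos hv] at hfuv; exact absurd hfuv (by decide)
  · -- both false: show ¬ C w
    rw [if_neg hu]
    push_neg at hu hv
    have hu1 : l₁ * p u + m₁ * q u ≤ 0 := hu.1
    have hv1 : l₁ * p v + m₁ * q v ≤ 0 := hv.1
    have hw0 : l₁ * p w + m₁ * q w ≤ 0 := by nlinarith
    have : ¬ (0 < l₁ * p w + m₁ * q w ∨
        (l₁ * p w + m₁ * q w = 0 ∧ 0 < l₂ * p w + m₂ * q w)) := by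
      push_neg
      refine ⟨hw0, fun hw1 => ?_⟩
      have hu0 : l₁ * p u + m₁ * q u = 0 := by nlinarith
      have hv0 : l₁ * p v + m₁ * q v = 0 := by nlinarith
      have hu2 := hu.2 hu0
      have hv2 := hv.2 hv0
      nlinarith
    rw [if_neg this]

lemma eq_of_two_funcs {g₁ g₂ : ℝ} (hg : ¬(g₁ = 0 ∧ g₂ = 0)) {a b : ℝ × ℝ}
    (h1 : g₁ * a.1 + g₂ * a.2 = g₁ * b.1 + g₂ * b.2)
    (h2 : g₂ * a.1 - g₁ * a.2 = g₂ * b.1 - g₁ * b.2) : a = b := by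
  have hgg : g₁^2 + g₂^2 ≠ 0 := by
    intro h
    exact hg ⟨by nlinarith [sq_nonneg g₁, sq_nonneg g₂], by nlinarith [sq_nonneg g₁, sq_nonneg g₂]⟩
  have ha : (g₁^2 + g₂^2) * (a.1 - b.1) = 0 := by linear_combination g₁ * h1 + g₂ * h2
  have hb : (g₁^2 + g₂^2) * (a.2 - b.2) = 0 := by linear_combination g₂ * h1 - g₁ * h2
  have e1 : a.1 = b.1 := by
    rcases mul_eq_zero.1 ha with h | h
    · exact absurd h hgg
    · linarith
  have e2 : a.2 = b.2 := by
    rcases mul_eq_zero.1 hb with h | h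
    · exact absurd h hgg
    · linarith
  exact Prod.ext e1 e2

lemma line_case (F : Set (ℝ × ℝ)) {z : ℝ × ℝ} (hz : z ∈ F.extremePoints ℝ) (g₁ g₂ : ℝ)
    (hg : ¬(g₁ = 0 ∧ g₂ = 0))
    (hconst : ∀ y ∈ F, g₁ * y.1 + g₂ * y.2 = g₁ * z.1 + g₂ * z.2) :
    ∃ l₂ m₂ : ℝ, (∀ y ∈ F, l₂ * y.1 + m₂ * y.2 ≤ l₂ * z.1 + m₂ * z.2) ∧
      (∀ y ∈ F, l₂ * y.1 + m₂ * y.2 = l₂ * z.1 + m₂ * z.2 → y = z) := by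
  set ψ : ℝ × ℝ → ℝ := fun y => g₂ * y.1 - g₁ * y.2 with hψ
  have hinj : ∀ y ∈ F, ψ y = ψ z → y = z := fun y hy hpsi =>
    eq_of_two_funcs hg (hconst y hy) hpsi
  by_cases hup : ∀ y ∈ F, ψ y ≤ ψ z
  · exact ⟨g₂, -g₁, fun y hy => by have := hup y hy; simp [hψ] at this; linarith,
      fun y hy he => hinj y hy (by simp [hψ]; linarith)⟩
  · push_neg at hup
    obtain ⟨yp, hyp, hlt⟩ := hup
    have claim : ∀ y ∈ F, ψ z ≤ ψ y := by
      intro ym hym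
      by_contra hneg
      push_neg at hneg
      set τ := (ψ yp - ψ z) / (ψ yp - ψ ym) with hτ
      have hden : 0 < ψ yp - ψ ym := by linarith
      have hτ0 : 0 < τ := div_pos (by linarith) hden
      have hτ1 : τ < 1 := by
        rw [hτ, div_lt_one hden]; linarith
      have hτψ : τ * ψ ym + (1 - τ) * ψ yp = ψ z := by
        have h' : τ * (ψ yp - ψ ym) = ψ yp - ψ z := by
          rw [hτ]; exact div_mul_cancel₀ _ hden.ne'
        linarith
      simp only [hψ] at hτψ
      have hcombo : z = τ • ym + (1 - τ) • yp := by
        apply eq_of_two_funcs hg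
        · have e1 := hconst ym hym
          have e2 := hconst yp hyp
          simp only [Prod.smul_fst, Prod.smul_snd, Prod.fst_add, Prod.snd_add, smul_eq_mul]
          linear_combination (-τ) * e1 - (1 - τ) * e2
        · simp only [Prod.smul_fst, Prod.smul_snd, Prod.fst_add, Prod.snd_add, smul_eq_mul]
          linear_combination (-1 : ℝ) * hτψ
      have hseg : z ∈ openSegment ℝ ym yp :=
        ⟨τ, 1 - τ, hτ0, by linarith, by ring, hcombo.symm⟩
      have hy1 := hz.2 hym hyp hseg
      rw [hy1] at hneg
      exact lt_irrefl _ hneg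
    exact ⟨-g₂, g₁, fun y hy => by have := claim y hy; simp [hψ] at this; linarith,
      fun y hy he => hinj y hy (by simp [hψ]; linarith)⟩

lemma planar_exposed (A'' : Set (ℝ × ℝ)) (hA : Convex ℝ A'') {z : ℝ × ℝ}
    (hz : z ∈ A''.extremePoints ℝ) :
    ∃ l₁ m₁ l₂ m₂ : ℝ,
      (∀ y ∈ A'', l₁ * y.1 + m₁ * y.2 ≤ l₁ * z.1 + m₁ * z.2) ∧
      (∀ y ∈ A'', l₁ * y.1 + m₁ * y.2 = l₁ * z.1 + m₁ * z.2 →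
        l₂ * y.1 + m₂ * y.2 ≤ l₂ * z.1 + m₂ * z.2) ∧
      (∀ y ∈ A'', l₁ * y.1 + m₁ * y.2 = l₁ * z.1 + m₁ * z.2 →
        l₂ * y.1 + m₂ * y.2 = l₂ * z.1 + m₂ * z.2 → y = z) := by
  have hzA : z ∈ A'' := hz.1
  by_cases hint : (interior A'').Nonempty
  · -- Case with interior: Hahn-Banach supporting functional
    have hzni : z ∉ interior A'' := by
      intro hzint
      have hnhds : A'' ∈ nhds z := mem_interior_iff_mem_nhds.1 hzint
      obtain ⟨δ, hδ, hball⟩ := Metric.mem_nhds_iff.1 hnhds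
      set v : ℝ × ℝ := (δ/2, 0) with hv
      have hy1 : z + v ∈ A'' := by
        apply hball
        simp only [Metric.mem_ball, dist_eq_norm, hv, Prod.norm_def, add_sub_cancel_left]
        simp [Real.norm_eq_abs, abs_of_pos hδ, abs_of_nonneg (le_of_lt (half_pos hδ))]
        linarith
      have hy2 : z - v ∈ A'' := by
        apply hball
        simp only [Metric.mem_ball, dist_eq_norm, hv, Prod.norm_def, sub_sub_cancel_left]
        simp [Real.norm_eq_abs, abs_of_pos hδ, abs_of_nonneg (le_of_lt (half_pos hδ))]
        linarith
      have hseg : z ∈ openSegment ℝ (z + v) (z - v) := by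
        refine ⟨1/2, 1/2, by norm_num, by norm_num, by norm_num, ?_⟩
        simp [Prod.ext_iff, Prod.smul_fst, Prod.smul_snd, smul_eq_mul]
        constructor <;> ring
      have h1 := hz.2 hy1 hy2 hseg
      have hfst := congrArg Prod.fst h1
      simp [hv] at hfst
      linarith
    obtain ⟨f, hf⟩ := geometric_hahn_banach_open_point hA.interior isOpen_interior hzni
    obtain ⟨w₀, hw₀⟩ := hint
    have hsupp : ∀ y ∈ A'', f y ≤ f z := by
      intro y hy
      by_contra hgt
      push_neg at hgt
      set c := f y - f z with hc
      have hcpos : 0 < c := by simp [hc]; linarith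
      set M := |f w₀ - f y| with hM
      obtain ⟨n, hn⟩ := exists_nat_gt (2 * (M + 1) / c)
      set τ : ℝ := 1 / (n + 2) with hτ
      have hτ0 : 0 < τ := by positivity
      have hτ1 : τ ≤ 1 := by
        rw [hτ]
        rw [div_le_one (by positivity)]
        have : (0:ℝ) ≤ n := Nat.cast_nonneg n
        linarith
      have hmem : τ • w₀ + (1 - τ) • y ∈ interior A'' :=
        hA.combo_interior_self_mem_interior hw₀ hy hτ0 (by linarith) (by ring)
      have hlt := hf _ hmem
      rw [map_add, map_smul, map_smul, smul_eq_mul, smul_eq_mul] at hlt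
      -- τ * f w₀ + (1 - τ) * f y < f z
      have hbound : τ * M < c / 2 := by
        have hτlt : τ < c / (2 * (M + 1)) := by
          rw [hτ]
          rw [div_lt_div_iff₀ (by positivity) (by positivity)]
          have h2 : 2 * (M + 1) / c < n + 2 := by
            have : (0:ℝ) ≤ n := Nat.cast_nonneg n
            linarith
          calc 1 * (2 * (M + 1)) = (2 * (M + 1) / c) * c := by field_simp
            _ < (n + 2) * c := by
              apply mul_lt_mul_of_pos_right h2 hcpos
            _ = c * (n + 2) := by ring
        have hM0 : 0 ≤ M := abs_nonneg _
        calc τ * M ≤ τ * (M + 1) := by nlinarith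
          _ < (c / (2 * (M + 1))) * (M + 1) := by
            apply mul_lt_mul_of_pos_right hτlt (by linarith)
          _ = c / 2 := by field_simp
      have habs : -(τ * M) ≤ τ * (f w₀ - f y) := by
        have : -(M) ≤ f w₀ - f y := neg_abs_le _
        nlinarith
      nlinarith
    set c₁ := f (1, 0) with hc₁
    set c₂ := f (0, 1) with hc₂
    have hflin : ∀ y : ℝ × ℝ, f y = c₁ * y.1 + c₂ * y.2 := by
      intro y
      have hdecomp : y = y.1 • ((1:ℝ), (0:ℝ)) + y.2 • ((0:ℝ), (1:ℝ)) := by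
        simp [Prod.ext_iff]
      rw [hdecomp, map_add, map_smul, map_smul, smul_eq_mul, smul_eq_mul]
      simp [hc₁, hc₂]
      ring
    have hfne : ¬(c₁ = 0 ∧ c₂ = 0) := by
      rintro ⟨h1, h2⟩
      have hw := hf w₀ hw₀
      rw [hflin w₀, hflin z] at hw
      rw [h1, h2] at hw
      simp at hw
    set F : Set (ℝ × ℝ) := {y ∈ A'' | c₁ * y.1 + c₂ * y.2 = c₁ * z.1 + c₂ * z.2} with hF
    have hzF : z ∈ F.extremePoints ℝ := by
      refine ⟨⟨hzA, rfl⟩, fun y₁ h₁ y₂ h₂ hseg => hz.2 h₁.1 h₂.1 hseg⟩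
    obtain ⟨l₂, m₂, hψ1, hψ2⟩ := line_case F hzF c₁ c₂ hfne (fun y hy => hy.2)
    refine ⟨c₁, c₂, l₂, m₂, ?_, ?_, ?_⟩
    · intro y hy
      have := hsupp y hy
      rw [hflin y, hflin z] at this
      exact this
    · intro y hy heq
      exact hψ1 y ⟨hy, heq⟩
    · intro y hy heq heq2
      exact hψ2 y ⟨hy, heq⟩ heq2
  · -- Empty interior: A'' lies in a line
    have hspan : affineSpan ℝ A'' ≠ ⊤ := by
      intro htop
      rw [← hA.interior_nonempty_iff_affineSpan_eq_top] at htop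
      exact hint htop
    have hdir : ∀ y ∈ A'', y - z ∈ (affineSpan ℝ A'').direction := fun y hy =>
      AffineSubspace.vsub_mem_direction (subset_affineSpan ℝ A'' hy) (subset_affineSpan ℝ A'' hzA)
    have hWne : (affineSpan ℝ A'').direction ≠ ⊤ := by
      intro htop
      apply hspan
      rw [AffineSubspace.direction_eq_top_iff_of_nonempty ⟨z, subset_affineSpan ℝ A'' hzA⟩] at htop
      exact htop
    by_cases hWbot : ∃ d : ℝ × ℝ, d ∈ (affineSpan ℝ A'').direction ∧ d ≠ 0
    · obtain ⟨d, hdW, hd0⟩ := hWbot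
      have hgW : ∀ u ∈ (affineSpan ℝ A'').direction, d.2 * u.1 - d.1 * u.2 = 0 := by
        intro u huW
        by_contra hne
        apply hWne
        rw [Submodule.eq_top_iff']
        intro x
        have hΔ : d.1 * u.2 - d.2 * u.1 ≠ 0 := by
          intro h; apply hne; linarith
        have hx : x = ((x.1 * u.2 - x.2 * u.1) / (d.1 * u.2 - d.2 * u.1)) • d +
            ((d.1 * x.2 - d.2 * x.1) / (d.1 * u.2 - d.2 * u.1)) • u := by
          simp only [Prod.ext_iff, Prod.smul_fst, Prod.smul_snd, Prod.fst_add, Prod.snd_add,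
            smul_eq_mul]
          constructor
          · rw [div_mul_eq_mul_div, div_mul_eq_mul_div, ← add_div, eq_div_iff hΔ]
            ring
          · rw [div_mul_eq_mul_div, div_mul_eq_mul_div, ← add_div, eq_div_iff hΔ]
            ring
        rw [hx]
        exact Submodule.add_mem _ (Submodule.smul_mem _ _ hdW) (Submodule.smul_mem _ _ huW)
      have hconst : ∀ y ∈ A'', d.2 * y.1 + (-d.1) * y.2 = d.2 * z.1 + (-d.1) * z.2 := by
        intro y hy
        have := hgW _ (hdir y hy)
        simp only [Prod.fst_sub, Prod.snd_sub] at this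
        linarith
      have hdne : ¬(d.2 = 0 ∧ -d.1 = 0) := by
        rintro ⟨h2, h1⟩
        apply hd0
        have h1' : d.1 = 0 := by linarith
        exact Prod.ext (by simp [h1']) (by simp [h2])
      obtain ⟨l₂, m₂, hψ1, hψ2⟩ := line_case A'' hz d.2 (-d.1) hdne hconst
      exact ⟨0, 0, l₂, m₂, fun y hy => by norm_num, fun y hy _ => hψ1 y hy,
        fun y hy _ h2 => hψ2 y hy h2⟩
    · push_neg at hWbot
      refine ⟨0, 0, 0, 0, fun y hy => by norm_num, fun y hy _ => by norm_num,
        fun y hy _ _ => ?_⟩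
      have h0 : y - z = 0 := hWbot _ (hdir y hy)
      exact sub_eq_zero.1 h0

lemma mul_detChannel {k : ℕ} (U : Matrix (Fin 2) (Fin 2) ℝ) (f : Fin k → Fin 2)
    (r : Fin 2) (i : Fin k) : (U * detChannel f) r i = U r (f i) := by
  rw [Matrix.mul_apply]
  simp [detChannel, mul_ite]

lemma RDP_comp {ε α : ℝ} {k : ℕ} {U : Matrix (Fin 2) (Fin 2) ℝ} (hU : IsRDP ε α U)
    (f : Fin k → Fin 2) : IsRDP ε α (U * detChannel f) := by
  refine ⟨⟨fun r c => ?_, fun c => ?_⟩, fun i j => ?_⟩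
  · rw [mul_detChannel]; exact hU.1.1 r (f c)
  · simp only [mul_detChannel]; exact hU.1.2 (f c)
  · rw [mul_detChannel, mul_detChannel]; exact hU.2 (f i) (f j)

lemma mulVec_apply' {k : ℕ} (S : Matrix (Fin 2) (Fin k) ℝ) (p : Fin k → ℝ) (r : Fin 2) :
    S.mulVec p r = ∑ j, S r j * p j := rfl

lemma phi_formula {k : ℕ} (l m : ℝ) (S : Matrix (Fin 2) (Fin k) ℝ) (p q : Fin k → ℝ) :
    l * S.mulVec p 0 + m * S.mulVec q 0 = ∑ j, S 0 j * (l * p j + m * q j) := by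
  simp only [mulVec_apply', Finset.mul_sum]
  rw [← Finset.sum_add_distrib]
  congr 1
  funext j
  ring

lemma mulVec_combo {k : ℕ} (U₁ U₂ : Matrix (Fin 2) (Fin 2) ℝ) (D : Matrix (Fin 2) (Fin k) ℝ)
    (p : Fin k → ℝ) (a b : ℝ) :
    ((a • U₁ + b • U₂) * D).mulVec p = a • (U₁ * D).mulVec p + b • (U₂ * D).mulVec p := by
  rw [Matrix.add_mul, Matrix.smul_mul, Matrix.smul_mul, Matrix.add_mulVec,
    Matrix.smul_mulVec, Matrix.smul_mulVec]

lemma fin2_eq_one {i : Fin 2} (h : i ≠ 0) : i = 1 := by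
  fin_cases i
  · exact absurd rfl h
  · rfl

lemma box_compact {m n : ℕ} :
    IsCompact {M : Matrix (Fin m) (Fin n) ℝ | ∀ r c, M r c ∈ Set.Icc (0:ℝ) 1} := by
  have h1 : ∀ _ : Fin m, IsCompact (Set.univ.pi fun _ : Fin n => Set.Icc (0:ℝ) 1) :=
    fun _ => isCompact_univ_pi fun _ => isCompact_Icc
  have h2 := isCompact_univ_pi (ι := Fin m) h1
  have e : {M : Matrix (Fin m) (Fin n) ℝ | ∀ r c, M r c ∈ Set.Icc (0:ℝ) 1} =
      Set.univ.pi fun _ : Fin m => Set.univ.pi fun _ : Fin n => Set.Icc (0:ℝ) 1 := by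
    ext M
    exact ⟨fun h i _ j _ => h i j, fun h r c => h r trivial c trivial⟩
  rw [e]; exact h2

/-- Extreme points of the joint range under Rényi differential privacy with binary outputs:
decomposition into a binary threshold channel followed by an extreme RDP channel. -/
theorem stmt18 (ε α : ℝ) (hε : 0 < ε) (hα : 1 < α) (k : ℕ)
    (p q : Fin k → ℝ) (hp : IsDist p) (hq : IsDist q) (hpq : ∀ i, 0 < p i + q i)
    (A : Set ((Fin 2 → ℝ) × (Fin 2 → ℝ)))
    (hA : A = {z | ∃ S : Matrix (Fin 2) (Fin k) ℝ,
        IsRDP ε α S ∧ z = (S.mulVec p, S.mulVec q)})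
    (T : Matrix (Fin 2) (Fin k) ℝ) (hT : IsRDP ε α T)
    (hext : (T.mulVec p, T.mulVec q) ∈ A.extremePoints ℝ) :
    ∃ (T₂ : Matrix (Fin 2) (Fin k) ℝ) (T₁ : Matrix (Fin 2) (Fin 2) ℝ),
      IsThresholdChannel p q T₂ ∧
      T₁ ∈ ({S : Matrix (Fin 2) (Fin 2) ℝ | IsRDP ε α S}).extremePoints ℝ ∧
      (T.mulVec p, T.mulVec q) = ((T₁ * T₂).mulVec p, (T₁ * T₂).mulVec q) := by
  rcases Nat.eq_zero_or_pos k with hk0 | hk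
  · exfalso
    have := hp.2
    subst hk0
    simp at this
  set z : (Fin 2 → ℝ) × (Fin 2 → ℝ) := (T.mulVec p, T.mulVec q) with hzdef
  have hAconv : Convex ℝ A := by
    rw [hA]
    rintro y₁ ⟨S₁, h₁, rfl⟩ y₂ ⟨S₂, h₂, rfl⟩ c d hc hd hcd
    refine ⟨c • S₁ + d • S₂, IsRDP_convex ε α hα k h₁ h₂ hc hd hcd, ?_⟩
    have e1 : (c • S₁ + d • S₂).mulVec p = c • S₁.mulVec p + d • S₂.mulVec p := by
      rw [Matrix.add_mulVec, Matrix.smul_mulVec, Matrix.smul_mulVec]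
    have e2 : (c • S₁ + d • S₂).mulVec q = c • S₁.mulVec q + d • S₂.mulVec q := by
      rw [Matrix.add_mulVec, Matrix.smul_mulVec, Matrix.smul_mulVec]
    exact Prod.ext (by simp [e1]) (by simp [e2])
  have memA : ∀ {S : Matrix (Fin 2) (Fin k) ℝ}, IsRDP ε α S →
      (S.mulVec p, S.mulVec q) ∈ A := by
    intro S hS
    rw [hA]
    exact ⟨S, hS, rfl⟩
  have hzA : z ∈ A := hext.1
  have hgraph : ∀ y ∈ A, y.1 1 = 1 - y.1 0 ∧ y.2 1 = 1 - y.2 0 := by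
    intro y hy
    rw [hA] at hy
    obtain ⟨S, hS, rfl⟩ := hy
    have hrow := channel_row1 hS.1
    constructor
    · show S.mulVec p 1 = 1 - S.mulVec p 0
      rw [mulVec_apply', mulVec_apply']
      calc ∑ j, S 1 j * p j = ∑ j, (p j - S 0 j * p j) := by
            apply Finset.sum_congr rfl
            intro j _
            rw [hrow j]; ring
        _ = 1 - ∑ j, S 0 j * p j := by rw [Finset.sum_sub_distrib, hp.2]
    · show S.mulVec q 1 = 1 - S.mulVec q 0
      rw [mulVec_apply', mulVec_apply']
      calc ∑ j, S 1 j * q j = ∑ j, (q j - S 0 j * q j) := by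
            apply Finset.sum_congr rfl
            intro j _
            rw [hrow j]; ring
        _ = 1 - ∑ j, S 0 j * q j := by rw [Finset.sum_sub_distrib, hq.2]
  have hπinj : ∀ y₁ ∈ A, ∀ y₂ ∈ A, y₁.1 0 = y₂.1 0 → y₁.2 0 = y₂.2 0 → y₁ = y₂ := by
    intro y₁ h₁ y₂ h₂ e1 e2
    obtain ⟨g1, g2⟩ := hgraph y₁ h₁
    obtain ⟨g3, g4⟩ := hgraph y₂ h₂
    refine Prod.ext (funext fun r => ?_) (funext fun r => ?_)
    · fin_cases r
      · exact e1
      · show y₁.1 1 = y₂.1 1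
        rw [g1, g3, e1]
    · fin_cases r
      · exact e2
      · show y₁.2 1 = y₂.2 1
        rw [g2, g4, e2]
  set π : ((Fin 2 → ℝ) × (Fin 2 → ℝ)) → ℝ × ℝ := fun y => (y.1 0, y.2 0) with hπdef
  set A'' : Set (ℝ × ℝ) := π '' A with hA''def
  have hA''conv : Convex ℝ A'' := by
    rintro _ ⟨y₁, hy₁, rfl⟩ _ ⟨y₂, hy₂, rfl⟩ c d hc hd hcd
    exact ⟨c • y₁ + d • y₂, hAconv hy₁ hy₂ hc hd hcd, by simp [hπdef, Prod.ext_iff]⟩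
  have hzp : π z ∈ A''.extremePoints ℝ := by
    refine ⟨⟨z, hzA, rfl⟩, ?_⟩
    intro y₁ h₁ y₂ h₂ hseg
    obtain ⟨Y₁, hY₁, rfl⟩ := h₁
    obtain ⟨Y₂, hY₂, rfl⟩ := h₂
    obtain ⟨c, d, hc, hd, hcd, hcombo⟩ := hseg
    have hYA : c • Y₁ + d • Y₂ ∈ A := hAconv hY₁ hY₂ hc.le hd.le hcd
    have h1 := congrArg Prod.fst hcombo
    have h2 := congrArg Prod.snd hcombo
    simp only [hπdef, Prod.fst_add, Prod.snd_add, Prod.smul_fst, Prod.smul_snd,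
      smul_eq_mul] at h1 h2
    have hπY1 : (c • Y₁ + d • Y₂).1 0 = z.1 0 := by
      simp only [Prod.fst_add, Prod.smul_fst, Pi.add_apply, Pi.smul_apply, smul_eq_mul]
      exact h1
    have hπY2 : (c • Y₁ + d • Y₂).2 0 = z.2 0 := by
      simp only [Prod.snd_add, Prod.smul_snd, Pi.add_apply, Pi.smul_apply, smul_eq_mul]
      exact h2
    have hzc : z = c • Y₁ + d • Y₂ := hπinj z hzA _ hYA hπY1.symm hπY2.symm
    have hres := hext.2 hY₁ hY₂ ⟨c, d, hc, hd, hcd, hzc.symm⟩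
    rw [hres]
  obtain ⟨l₁, m₁, l₂, m₂, P1, P2, P3⟩ := planar_exposed A'' hA''conv hzp
  have hπmem : ∀ {S : Matrix (Fin 2) (Fin k) ℝ}, IsRDP ε α S →
      π (S.mulVec p, S.mulVec q) ∈ A'' := fun hS => ⟨_, memA hS, rfl⟩
  have hφ : ∀ {S : Matrix (Fin 2) (Fin k) ℝ}, IsRDP ε α S →
      ∑ j, S 0 j * (l₁ * p j + m₁ * q j) ≤ ∑ j, T 0 j * (l₁ * p j + m₁ * q j) := by
    intro S hS
    have h := P1 _ (hπmem hS)
    simp only [hπdef, hzdef] at h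
    rwa [phi_formula l₁ m₁ S p q, phi_formula l₁ m₁ T p q] at h
  obtain ⟨u₀, -, hu₀⟩ := Finset.exists_min_image Finset.univ (fun i => T 0 i)
    ⟨⟨0, hk⟩, Finset.mem_univ _⟩
  obtain ⟨v₀, -, hv₀⟩ := Finset.exists_max_image Finset.univ (fun i => T 0 i)
    ⟨⟨0, hk⟩, Finset.mem_univ _⟩
  have ha0 : 0 ≤ T 0 u₀ := hT.1.1 0 u₀
  have ha1 : T 0 u₀ ≤ 1 := channel_le_one hT.1 0 u₀
  have hb0 : 0 ≤ T 0 v₀ := hT.1.1 0 v₀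
  have hb1 : T 0 v₀ ≤ 1 := channel_le_one hT.1 0 v₀
  set f : Fin k → Fin 2 := fun i =>
    if 0 < l₁ * p i + m₁ * q i ∨ (l₁ * p i + m₁ * q i = 0 ∧ 0 < l₂ * p i + m₂ * q i)
    then (0 : Fin 2) else 1 with hfdef
  set T₂ : Matrix (Fin 2) (Fin k) ℝ := detChannel f with hT₂def
  set T₁ : Matrix (Fin 2) (Fin 2) ℝ := fun r c =>
    if r = 0 then (if c = 0 then T 0 v₀ else T 0 u₀)
    else (if c = 0 then 1 - T 0 v₀ else 1 - T 0 u₀) with hT₁def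
  have hT₁chan : IsChannel T₁ := by
    constructor
    · intro r c
      fin_cases r <;> fin_cases c <;> simp [hT₁def] <;> linarith
    · intro c
      rw [Fin.sum_univ_two]
      fin_cases c <;> simp [hT₁def]
  have hT₁row : ∀ i : Fin 2, T₁ 0 i = T 0 v₀ ∨ T₁ 0 i = T 0 u₀ := by
    intro i
    fin_cases i
    · left; simp [hT₁def]
    · right; simp [hT₁def]
  have hT₁RDP : IsRDP ε α T₁ := by
    refine ⟨hT₁chan, fun i j => ?_⟩
    rcases hT₁row i with hi | hi <;> rcases hT₁row j with hj | hj <;> rw [hi, hj]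
    · rw [Fa_self hα hb0 hb1]; exact one_le_K hε hα
    · exact hT.2 v₀ u₀
    · exact hT.2 u₀ v₀
    · rw [Fa_self hα ha0 ha1]; exact one_le_K hε hα
  have hS'RDP : IsRDP ε α (T₁ * T₂) := by
    rw [hT₂def]; exact RDP_comp hT₁RDP f
  have hfC : ∀ i, f i = 0 ↔
      (0 < l₁ * p i + m₁ * q i ∨ (l₁ * p i + m₁ * q i = 0 ∧ 0 < l₂ * p i + m₂ * q i)) := by
    intro i
    rw [hfdef]
    by_cases h : 0 < l₁ * p i + m₁ * q i ∨ (l₁ * p i + m₁ * q i = 0 ∧ 0 < l₂ * p i + m₂ * q i)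
    · simp [h]
    · simp [h]
  have hS'row : ∀ i, (T₁ * T₂) 0 i = if f i = 0 then T 0 v₀ else T 0 u₀ := by
    intro i
    rw [hT₂def, mul_detChannel]
    by_cases h : f i = 0
    · rw [if_pos h, h]; simp [hT₁def]
    · rw [if_neg h, fin2_eq_one h]; simp [hT₁def]
  have hterm0 : ∀ j, 0 ≤ ((T₁ * T₂) 0 j - T 0 j) * (l₁ * p j + m₁ * q j) := by
    intro j
    rw [hS'row j]
    by_cases hCj : f j = 0
    · rw [if_pos hCj]
      have hC := (hfC j).1 hCj
      have hwj : 0 ≤ l₁ * p j + m₁ * q j := by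
        rcases hC with h | h
        · linarith
        · linarith [h.1]
      exact mul_nonneg (by linarith [hv₀ j (Finset.mem_univ j)]) hwj
    · rw [if_neg hCj]
      have hnC : ¬(0 < l₁ * p j + m₁ * q j ∨
          (l₁ * p j + m₁ * q j = 0 ∧ 0 < l₂ * p j + m₂ * q j)) :=
        fun h => hCj ((hfC j).2 h)
      push_neg at hnC
      have hwj : l₁ * p j + m₁ * q j ≤ 0 := hnC.1
      have hdj : T 0 u₀ - T 0 j ≤ 0 := by linarith [hu₀ j (Finset.mem_univ j)]
      nlinarith
  have hexpand : ∀ (g : Fin k → ℝ),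
      ∑ j, ((T₁ * T₂) 0 j - T 0 j) * g j
        = ∑ j, (T₁ * T₂) 0 j * g j - ∑ j, T 0 j * g j := by
    intro g
    rw [← Finset.sum_sub_distrib]
    apply Finset.sum_congr rfl
    intro j _
    ring
  have hzero : ∑ j, ((T₁ * T₂) 0 j - T 0 j) * (l₁ * p j + m₁ * q j) = 0 := by
    have hge := Finset.sum_nonneg (fun j (_ : j ∈ Finset.univ) => hterm0 j)
    have hle := hφ hS'RDP
    rw [hexpand] at hge ⊢
    linarith
  have hterm : ∀ j, ((T₁ * T₂) 0 j - T 0 j) * (l₁ * p j + m₁ * q j) = 0 := fun j =>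
    (Finset.sum_eq_zero_iff_of_nonneg (fun j _ => hterm0 j)).1 hzero j (Finset.mem_univ j)
  have htermv : ∀ j, 0 ≤ ((T₁ * T₂) 0 j - T 0 j) * (l₂ * p j + m₂ * q j) := by
    intro j
    rcases eq_or_ne (l₁ * p j + m₁ * q j) 0 with hwj | hwj
    · rw [hS'row j]
      by_cases hCj : f j = 0
      · rw [if_pos hCj]
        rcases (hfC j).1 hCj with h | h
        · exact absurd hwj (by linarith)
        · exact mul_nonneg (by linarith [hv₀ j (Finset.mem_univ j)]) h.2.le
      · rw [if_neg hCj]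
        have hnC : ¬(0 < l₁ * p j + m₁ * q j ∨
            (l₁ * p j + m₁ * q j = 0 ∧ 0 < l₂ * p j + m₂ * q j)) :=
          fun h => hCj ((hfC j).2 h)
        push_neg at hnC
        have hvj := hnC.2 hwj
        have hdj : T 0 u₀ - T 0 j ≤ 0 := by linarith [hu₀ j (Finset.mem_univ j)]
        nlinarith
    · have h0 := hterm j
      rcases mul_eq_zero.1 h0 with h | h
      · rw [h, zero_mul]
      · exact absurd h hwj
  have hψge : ∑ j, T 0 j * (l₂ * p j + m₂ * q j)
      ≤ ∑ j, (T₁ * T₂) 0 j * (l₂ * p j + m₂ * q j) := by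
    have hge := Finset.sum_nonneg (fun j (_ : j ∈ Finset.univ) => htermv j)
    rw [hexpand] at hge
    linarith
  have hπS' : π ((T₁ * T₂).mulVec p, (T₁ * T₂).mulVec q) ∈ A'' := hπmem hS'RDP
  have hφsum : ∑ j, (T₁ * T₂) 0 j * (l₁ * p j + m₁ * q j)
      = ∑ j, T 0 j * (l₁ * p j + m₁ * q j) := by
    rw [hexpand] at hzero
    linarith
  have hφeqπ : l₁ * (π ((T₁ * T₂).mulVec p, (T₁ * T₂).mulVec q)).1
      + m₁ * (π ((T₁ * T₂).mulVec p, (T₁ * T₂).mulVec q)).2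
      = l₁ * (π z).1 + m₁ * (π z).2 := by
    simp only [hπdef, hzdef]
    rw [phi_formula l₁ m₁ (T₁ * T₂) p q, phi_formula l₁ m₁ T p q]
    exact hφsum
  have hψleπ := P2 _ hπS' hφeqπ
  have hψle : ∑ j, (T₁ * T₂) 0 j * (l₂ * p j + m₂ * q j)
      ≤ ∑ j, T 0 j * (l₂ * p j + m₂ * q j) := by
    simp only [hπdef, hzdef] at hψleπ
    rwa [phi_formula l₂ m₂ (T₁ * T₂) p q, phi_formula l₂ m₂ T p q] at hψleπ
  have hψeqπ : l₂ * (π ((T₁ * T₂).mulVec p, (T₁ * T₂).mulVec q)).1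
      + m₂ * (π ((T₁ * T₂).mulVec p, (T₁ * T₂).mulVec q)).2
      = l₂ * (π z).1 + m₂ * (π z).2 := by
    simp only [hπdef, hzdef]
    rw [phi_formula l₂ m₂ (T₁ * T₂) p q, phi_formula l₂ m₂ T p q]
    exact le_antisymm hψle hψge
  have hππ := P3 _ hπS' hφeqπ hψeqπ
  have hc1 : ((T₁ * T₂).mulVec p) 0 = z.1 0 := by
    have := congrArg Prod.fst hππ
    simpa [hπdef] using this
  have hc2 : ((T₁ * T₂).mulVec q) 0 = z.2 0 := by
    have := congrArg Prod.snd hππ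
    simpa [hπdef] using this
  have hzz : ((T₁ * T₂).mulVec p, (T₁ * T₂).mulVec q) = z :=
    hπinj _ (memA hS'RDP) _ hzA hc1 hc2
  -- the fiber over z inside 2×2 RDP channels
  set Fib : Set (Matrix (Fin 2) (Fin 2) ℝ) :=
    {U | IsRDP ε α U ∧ ((U * T₂).mulVec p, (U * T₂).mulVec q) = z} with hFibdef
  have hT₁Fib : T₁ ∈ Fib := ⟨hT₁RDP, hzz⟩
  have hFibconv : Convex ℝ Fib := by
    intro U₁ h₁ U₂ h₂ c d hc hd hcd
    refine ⟨IsRDP_convex ε α hα 2 h₁.1 h₂.1 hc hd hcd, ?_⟩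
    have e₁ := congrArg Prod.fst h₁.2
    have e₂ := congrArg Prod.fst h₂.2
    have e₃ := congrArg Prod.snd h₁.2
    have e₄ := congrArg Prod.snd h₂.2
    simp only at e₁ e₂ e₃ e₄
    refine Prod.ext ?_ ?_
    · show ((c • U₁ + d • U₂) * T₂).mulVec p = z.1
      rw [mulVec_combo, e₁, e₂, ← add_smul, hcd, one_smul]
    · show ((c • U₁ + d • U₂) * T₂).mulVec q = z.2
      rw [mulVec_combo, e₃, e₄, ← add_smul, hcd, one_smul]
  have hcont : ∀ v : Fin k → ℝ,
      Continuous fun U : Matrix (Fin 2) (Fin 2) ℝ => (U * T₂).mulVec v := by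
    intro v
    apply continuous_pi
    intro r
    have hrw : (fun U : Matrix (Fin 2) (Fin 2) ℝ => (U * T₂).mulVec v r)
        = fun U => ∑ j, U r (f j) * v j := by
      funext U
      rw [mulVec_apply']
      apply Finset.sum_congr rfl
      intro j _
      rw [hT₂def, mul_detChannel]
    rw [hrw]
    exact continuous_finset_sum _ fun j _ =>
      ((((continuous_apply (f j)).comp (continuous_apply r) :
        Continuous fun U : Matrix (Fin 2) (Fin 2) ℝ => U r (f j))).mul continuous_const)
  have hFibclosed : IsClosed Fib := by
    have heq : Fib = {U : Matrix (Fin 2) (Fin 2) ℝ | IsRDP ε α U} ∩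
        {U : Matrix (Fin 2) (Fin 2) ℝ | ((U * T₂).mulVec p, (U * T₂).mulVec q) = z} := rfl
    rw [heq]
    exact (RDP_closed ε α hε hα 2).inter
      (isClosed_eq (Continuous.prodMk (hcont p) (hcont q)) continuous_const)
  have hFibbdd : Fib ⊆ {M : Matrix (Fin 2) (Fin 2) ℝ | ∀ r c, M r c ∈ Set.Icc (0:ℝ) 1} := by
    intro U hU r c
    exact ⟨hU.1.1.1 r c, channel_le_one hU.1.1 r c⟩
  have hFibcompact : IsCompact Fib := box_compact.of_isClosed_subset hFibclosed hFibbdd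
  obtain ⟨U₀, hU₀⟩ := hFibcompact.extremePoints_nonempty ⟨T₁, hT₁Fib⟩
  have hU₀Fib : U₀ ∈ Fib := hU₀.1
  have hU₀ext : U₀ ∈ ({S : Matrix (Fin 2) (Fin 2) ℝ | IsRDP ε α S}).extremePoints ℝ := by
    refine ⟨hU₀Fib.1, ?_⟩
    intro U₁ h₁ U₂ h₂ hseg
    obtain ⟨c, d, hc, hd, hcd, hcombo⟩ := hseg
    have hY₁ : ((U₁ * T₂).mulVec p, (U₁ * T₂).mulVec q) ∈ A := by
      rw [hT₂def]
      exact memA (RDP_comp h₁ f)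
    have hY₂ : ((U₂ * T₂).mulVec p, (U₂ * T₂).mulVec q) ∈ A := by
      rw [hT₂def]
      exact memA (RDP_comp h₂ f)
    have hLcombo : ((U₀ * T₂).mulVec p, (U₀ * T₂).mulVec q)
        = c • ((U₁ * T₂).mulVec p, (U₁ * T₂).mulVec q)
          + d • ((U₂ * T₂).mulVec p, (U₂ * T₂).mulVec q) := by
      rw [← hcombo]
      refine Prod.ext ?_ ?_
      · show ((c • U₁ + d • U₂) * T₂).mulVec p = _
        rw [mulVec_combo]
        rfl
      · show ((c • U₁ + d • U₂) * T₂).mulVec q = _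
        rw [mulVec_combo]
        rfl
    have hzY : z = c • ((U₁ * T₂).mulVec p, (U₁ * T₂).mulVec q)
        + d • ((U₂ * T₂).mulVec p, (U₂ * T₂).mulVec q) := by
      rw [← hU₀Fib.2, hLcombo]
    have hres := hext.2 hY₁ hY₂ ⟨c, d, hc, hd, hcd, hzY.symm⟩
    have hres2 := hext.2 hY₂ hY₁ ⟨d, c, hd, hc, by linarith, by rw [add_comm]; exact hzY.symm⟩
    exact hU₀.2 ⟨h₁, hres⟩ ⟨h₂, hres2⟩ ⟨c, d, hc, hd, hcd, hcombo⟩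
  refine ⟨T₂, U₀, ?_, hU₀ext, hU₀Fib.2.symm⟩
  rw [hT₂def, hfdef]
  exact threshold_construction p q hp.1 hq.1 hpq l₁ m₁ l₂ m₂
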